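/- arXiv:1805.06773 — 3 statements merged into one kernel-verified Lean document; each statement's English description precedes it below -/
import Mathlib

section
/- Let A be a finite set of points in R^m all componentwise above the reference point r, and λ a direction with strictly positive components. Then max_{a∈A} g^mtch(a|λ,r) equals the length of the segment from r along direction λ/‖λ‖₂ up to the point where the ray r + tλ leaves the dominated region D(A,r) = ∪_{a∈A}{b : r ≤ b ≤ a}, i.e., max_{a∈A} g^mtch(a|λ,r) = sup{t ≥ 0 : r + tλ ∈ D(A,r)} when ‖λ‖₂ = 1. -/
open Finset

/-- For a finite nonempty set `A` of points componentwise above `r` and a unit direction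
`λ` with strictly positive components, `max_{a∈A} g^mtch(a|λ,r)` equals
`sup {t ≥ 0 : r + tλ ∈ D(A,r)}` where `D(A,r) = ⋃_{a∈A} [r,a]`. -/
theorem max_gmtch_eq_sSup_ray (m : ℕ) [NeZero m] (A : Finset (Fin m → ℝ)) (hA : A.Nonempty)
    (r lam : Fin m → ℝ) (hlam : ∀ j, 0 < lam j)
    (hnorm : Real.sqrt (∑ j, lam j ^ 2) = 1)
    (hdom : ∀ a ∈ A, ∀ j, r j ≤ a j) :
    A.sup' hA (fun a => Finset.univ.inf' Finset.univ_nonempty fun j => (a j - r j) / lam j)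
      = sSup {t : ℝ | 0 ≤ t ∧ (fun j => r j + t * lam j) ∈ ⋃ a ∈ A, Set.Icc r a} := by
  set g : (Fin m → ℝ) → ℝ :=
    fun a => Finset.univ.inf' Finset.univ_nonempty fun j => (a j - r j) / lam j with hg
  set M := A.sup' hA g with hM
  have hM0 : 0 ≤ M := by
    obtain ⟨a, ha⟩ := hA
    refine le_trans ?_ (Finset.le_sup' g ha)
    apply Finset.le_inf'
    intro j _
    exact div_nonneg (sub_nonneg.2 (hdom a ha j)) (hlam j).le
  have hset : {t : ℝ | 0 ≤ t ∧ (fun j => r j + t * lam j) ∈ ⋃ a ∈ A, Set.Icc r a}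
      = Set.Icc 0 M := by
    ext t
    simp only [Set.mem_setOf_eq, Set.mem_iUnion, Set.mem_Icc, Pi.le_def]
    constructor
    · rintro ⟨ht, a, ha, h1, h2⟩
      refine ⟨ht, le_trans ?_ (Finset.le_sup' g ha)⟩
      apply Finset.le_inf'
      intro j _
      rw [le_div_iff₀ (hlam j)]
      linarith [h2 j]
    · rintro ⟨ht, htM⟩
      obtain ⟨a, ha, hMa⟩ := Finset.exists_mem_eq_sup' hA g
      refine ⟨ht, a, ha, fun j => ?_, fun j => ?_⟩
      · nlinarith [(hlam j).le]
      · have h1 : t ≤ g a := le_trans htM (le_of_eq hMa)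
        have hj : t ≤ (a j - r j) / lam j :=
          le_trans h1 (Finset.inf'_le _ (Finset.mem_univ j))
        rw [le_div_iff₀ (hlam j)] at hj
        linarith
  rw [hset, csSup_Icc hM0]
end

section
/- Line-segment length formula inside the contribution region: let A ⊆ R^m be finite, s ∈ A with s_j > r_j for all j, λ with strictly positive components and ‖λ‖₂ = 1. Define L(s,A,r,λ) = min{ min_{a∈A\{s}} max_j (s_j − a_j)/λ_j , min_j (s_j − r_j)/λ_j }. Then for 0 ≤ t < L(s,A,r,λ), the point s − tλ lies in the exclusive contribution region E(s) = {b : r ≤ b ≤ s} \ ∪_{a∈A\{s}}{b : b ≤ a}, and for t > L(s,A,r,λ), s − tλ ∉ E(s). Hence L(s,A,r,λ) = sup{t ≥ 0 : s − tλ ∈ E(s)} (assuming min_{a∈A\{s}} max_j (s_j−a_j)/λ_j > 0). -/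
open Finset

/-- Segment-length formula inside the exclusive contribution region: with
`L(s,A,r,λ) = min{min_{a∈A\{s}} max_j (s_j−a_j)/λ_j, min_j (s_j−r_j)/λ_j}`, the point
`s − tλ` lies in the exclusive region `E(s)` for `0 ≤ t < L` and outside it for `t > L`,
hence `L = sup {t ≥ 0 : s − tλ ∈ E(s)}`. -/
theorem segment_length_formula (m : ℕ) [NeZero m] (A : Finset (Fin m → ℝ))
    (s : Fin m → ℝ) (hs : s ∈ A) (hAs : (A.erase s).Nonempty)
    (r : Fin m → ℝ) (hr : ∀ j, r j < s j)
    (lam : Fin m → ℝ) (hlam : ∀ j, 0 < lam j)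
    (hnorm : Real.sqrt (∑ j, lam j ^ 2) = 1)
    (E : Set (Fin m → ℝ))
    (hE : E = {b | (∀ j, r j ≤ b j ∧ b j ≤ s j) ∧ ∀ a ∈ A.erase s, ∃ j, a j < b j})
    (L : ℝ)
    (hL : L = min
        ((A.erase s).inf' hAs fun a =>
          Finset.univ.sup' Finset.univ_nonempty fun j => (s j - a j) / lam j)
        (Finset.univ.inf' Finset.univ_nonempty fun j => (s j - r j) / lam j))
    (hpos : 0 < (A.erase s).inf' hAs fun a =>
        Finset.univ.sup' Finset.univ_nonempty fun j => (s j - a j) / lam j) :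
    (∀ t : ℝ, 0 ≤ t → t < L → (fun j => s j - t * lam j) ∈ E) ∧
    (∀ t : ℝ, L < t → (fun j => s j - t * lam j) ∉ E) ∧
    L = sSup {t : ℝ | 0 ≤ t ∧ (fun j => s j - t * lam j) ∈ E} := by
  have hLr : 0 < Finset.univ.inf' Finset.univ_nonempty fun j => (s j - r j) / lam j := by
    rw [Finset.lt_inf'_iff]
    intro j _
    exact div_pos (by linarith [hr j]) (hlam j)
  have hLpos : 0 < L := by rw [hL]; exact lt_min hpos hLr
  have h1 : ∀ t : ℝ, 0 ≤ t → t < L → (fun j => s j - t * lam j) ∈ E := by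
    intro t ht htL
    rw [hE]
    refine ⟨fun j => ⟨?_, ?_⟩, fun a ha => ?_⟩
    · show r j ≤ s j - t * lam j
      have h := Finset.inf'_le (fun j => (s j - r j) / lam j) (Finset.mem_univ j)
      have h2 : t < (s j - r j) / lam j :=
        lt_of_lt_of_le (htL.trans_le (hL ▸ min_le_right _ _)) h
      rw [lt_div_iff₀ (hlam j)] at h2
      linarith
    · show s j - t * lam j ≤ s j
      have := mul_nonneg ht (hlam j).le
      linarith
    · have h := Finset.inf'_le (fun a =>
        Finset.univ.sup' Finset.univ_nonempty fun j => (s j - a j) / lam j) ha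
      have h2 : t < Finset.univ.sup' Finset.univ_nonempty fun j => (s j - a j) / lam j :=
        lt_of_lt_of_le (htL.trans_le (hL ▸ min_le_left _ _)) h
      rw [Finset.lt_sup'_iff] at h2
      obtain ⟨j, _, hj⟩ := h2
      rw [lt_div_iff₀ (hlam j)] at hj
      exact ⟨j, show a j < s j - t * lam j by linarith⟩
  have h2 : ∀ t : ℝ, L < t → (fun j => s j - t * lam j) ∉ E := by
    intro t htL hmem
    rw [hE] at hmem
    obtain ⟨hbox, hdom⟩ := hmem
    rw [hL, min_lt_iff] at htL
    rcases htL with h | h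
    · rw [Finset.inf'_lt_iff] at h
      obtain ⟨a, ha, hsup⟩ := h
      rw [Finset.sup'_lt_iff] at hsup
      obtain ⟨j, hj⟩ := hdom a ha
      have h3 := hsup j (Finset.mem_univ j)
      rw [div_lt_iff₀ (hlam j)] at h3
      simp only at hj
      linarith
    · rw [Finset.inf'_lt_iff] at h
      obtain ⟨j, _, hj⟩ := h
      rw [div_lt_iff₀ (hlam j)] at hj
      have h4 := (hbox j).1
      simp only at h4
      linarith
  refine ⟨h1, h2, ?_⟩
  set S := {t : ℝ | 0 ≤ t ∧ (fun j => s j - t * lam j) ∈ E} with hS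
  have hSub : ∀ t ∈ S, t ≤ L := by
    rintro t ⟨ht0, htE⟩
    by_contra hc
    exact h2 t (lt_of_not_ge hc) htE
  have hS0 : (0:ℝ) ∈ S := ⟨le_refl 0, h1 0 le_rfl hLpos⟩
  have hbdd : BddAbove S := ⟨L, hSub⟩
  apply le_antisymm
  · by_contra hc
    push_neg at hc
    have hu0 : (0:ℝ) ≤ sSup S := le_csSup hbdd hS0
    have hmid : (sSup S + L)/2 ∈ S :=
      ⟨by linarith, h1 _ (by linarith) (by linarith)⟩
    have := le_csSup hbdd hmid
    linarith
  · exact csSup_le ⟨0, hS0⟩ hSub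
end

section
/- For a single point a ∈ R^m strictly dominating the reference point r, the hypervolume HV({a},r) equals the product ∏_{j=1}^m (a_j − r_j), and also HV({a},r) = ∫_{S_+} g^mtch(a|λ,r)^m / m dσ(λ) where σ is the surface measure on the nonnegative portion S_+ of the unit sphere. -/
open MeasureTheory Finset Set Metric

lemma box_eq (m : ℕ) (a r : EuclideanSpace ℝ (Fin m)) :
    {b : EuclideanSpace ℝ (Fin m) | ∀ j, r j ≤ b j ∧ b j ≤ a j}
      = (MeasurableEquiv.toLp 2 (Fin m → ℝ)).symm ⁻¹' (Set.univ.pi fun j => Set.Icc (r j) (a j)) := by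
  ext b
  simp only [Set.mem_preimage, Set.mem_pi, Set.mem_univ, Set.mem_Icc, forall_true_left, Set.mem_setOf_eq]
  rfl

lemma box_vol (m : ℕ) (a r : EuclideanSpace ℝ (Fin m)) (hdom : ∀ j, r j ≤ a j) :
    volume ({b : EuclideanSpace ℝ (Fin m) | ∀ j, r j ≤ b j ∧ b j ≤ a j})
      = ENNReal.ofReal (∏ j, (a j - r j)) := by
  rw [box_eq, (EuclideanSpace.volume_preserving_symm_measurableEquiv_toLp (Fin m)).measure_preimage
    ((MeasurableSet.univ_pi fun j => measurableSet_Icc).nullMeasurableSet)]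
  rw [volume_pi_pi]
  rw [ENNReal.ofReal_prod_of_nonneg fun j _ => sub_nonneg.2 (hdom j)]
  simp [Real.volume_Icc]


lemma integral_volumeIoiPow (n : ℕ) (g : ℝ → ℝ) :
    ∫ x : Set.Ioi (0:ℝ), g x ∂(Measure.volumeIoiPow n) = ∫ t in Set.Ioi (0:ℝ), t ^ n * g t := by
  rw [Measure.volumeIoiPow]
  simp only [ENNReal.ofReal]
  rw [integral_withDensity_eq_integral_smul ((measurable_subtype_coe.pow_const _).real_toNNReal)]
  rw [integral_subtype_comap measurableSet_Ioi fun a => Real.toNNReal (a ^ n) • g a]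
  refine setIntegral_congr_fun measurableSet_Ioi fun x hx => ?_
  rw [NNReal.smul_def, Real.coe_toNNReal _ (pow_nonneg hx.out.le _), smul_eq_mul]

lemma coord_zero_null (m : ℕ) (j : Fin m) :
    (volume : Measure (EuclideanSpace ℝ (Fin m))).toSphere
      {x : sphere (0 : EuclideanSpace ℝ (Fin m)) 1 | (x : EuclideanSpace ℝ (Fin m)) j = 0} = 0 := by
  have hcont : Continuous fun x : sphere (0 : EuclideanSpace ℝ (Fin m)) 1 =>
      (x : EuclideanSpace ℝ (Fin m)) j :=
    (EuclideanSpace.proj j).continuous.comp continuous_subtype_val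
  have hs : MeasurableSet {x : sphere (0 : EuclideanSpace ℝ (Fin m)) 1 |
      (x : EuclideanSpace ℝ (Fin m)) j = 0} :=
    (isClosed_singleton.preimage hcont).measurableSet
  rw [Measure.toSphere_apply' _ hs]
  refine mul_eq_zero_of_right _ (measure_mono_null ?_ (Measure.addHaar_submodule volume
    (LinearMap.ker ((EuclideanSpace.proj j : StrongDual ℝ (EuclideanSpace ℝ (Fin m))) : EuclideanSpace ℝ (Fin m) →ₗ[ℝ] ℝ)) ?_))
  · rintro y ⟨t, ht, x, ⟨z, hz, rfl⟩, rfl⟩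
    simp only [SetLike.mem_coe, LinearMap.mem_ker, ContinuousLinearMap.coe_coe,
      PiLp.proj_apply]
    show (t • (z : EuclideanSpace ℝ (Fin m))) j = 0
    simp only [PiLp.smul_apply, smul_eq_mul]
    rw [hz, mul_zero]
  · intro htop
    have h1 : (EuclideanSpace.single j (1:ℝ)) ∈
        LinearMap.ker ((EuclideanSpace.proj j : StrongDual ℝ (EuclideanSpace ℝ (Fin m))) : EuclideanSpace ℝ (Fin m) →ₗ[ℝ] ℝ) :=
      htop ▸ Submodule.mem_top
    simp [LinearMap.mem_ker] at h1

lemma part2 (m : ℕ) [NeZero m] (c : EuclideanSpace ℝ (Fin m)) (hc : ∀ j, 0 < c j) :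
    (∏ j, c j)
      = ∫ lam in {x : sphere (0 : EuclideanSpace ℝ (Fin m)) 1 |
            ∀ j, 0 ≤ (x : EuclideanSpace ℝ (Fin m)) j},
          (Finset.univ.inf' Finset.univ_nonempty fun j =>
            c j / (lam : EuclideanSpace ℝ (Fin m)) j) ^ m / m
          ∂((volume : Measure (EuclideanSpace ℝ (Fin m))).toSphere) := by
  classical
  set B : Set (EuclideanSpace ℝ (Fin m)) :=
    {b : EuclideanSpace ℝ (Fin m) | ∀ j, 0 ≤ b j ∧ b j ≤ c j} with hBdef
  have hBm : MeasurableSet B := by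
    have : B = ⋂ j, {b : EuclideanSpace ℝ (Fin m) | 0 ≤ b j ∧ b j ≤ c j} := by
      ext b; simp [hBdef]
    rw [this]
    refine MeasurableSet.iInter fun j => ?_
    have hcont : Continuous fun b : EuclideanSpace ℝ (Fin m) => b j :=
      (EuclideanSpace.proj j).continuous
    exact (measurableSet_le measurable_const hcont.measurable).inter
      (measurableSet_le hcont.measurable measurable_const)
  have hvolB : volume B = ENNReal.ofReal (∏ j, c j) := by
    have h := box_vol m c 0 (fun j => by simpa using (hc j).le)
    simpa using h
  set σ := (volume : Measure (EuclideanSpace ℝ (Fin m))).toSphere with hσ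
  have hMP := (volume : Measure (EuclideanSpace ℝ (Fin m))).measurePreserving_homeomorphUnitSphereProd
  rw [show Module.finrank ℝ (EuclideanSpace ℝ (Fin m)) = m from finrank_euclideanSpace_fin] at hMP
  set Splus : Set (sphere (0 : EuclideanSpace ℝ (Fin m)) 1) :=
    {x : sphere (0 : EuclideanSpace ℝ (Fin m)) 1 |
      ∀ j, 0 ≤ (x : EuclideanSpace ℝ (Fin m)) j} with hSp
  have hSplusm : MeasurableSet Splus := by
    have : Splus = ⋂ j, {x : sphere (0 : EuclideanSpace ℝ (Fin m)) 1 |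
        0 ≤ (x : EuclideanSpace ℝ (Fin m)) j} := by ext x; simp [hSp]
    rw [this]
    refine MeasurableSet.iInter fun j => ?_
    have hcont : Continuous fun x : sphere (0 : EuclideanSpace ℝ (Fin m)) 1 =>
        (x : EuclideanSpace ℝ (Fin m)) j :=
      (EuclideanSpace.proj j).continuous.comp continuous_subtype_val
    exact measurableSet_le measurable_const hcont.measurable
  set G : sphere (0 : EuclideanSpace ℝ (Fin m)) 1 → ℝ := fun lam =>
    (Finset.univ.inf' Finset.univ_nonempty fun j =>
      c j / (lam : EuclideanSpace ℝ (Fin m)) j) ^ m / m with hG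
  set f : sphere (0 : EuclideanSpace ℝ (Fin m)) 1 × Ioi (0:ℝ) → ℝ :=
    fun p => B.indicator (fun _ => (1:ℝ)) ((p.2 : ℝ) • (p.1 : EuclideanSpace ℝ (Fin m))) with hf
  have hcomp : ∀ x : ({0}ᶜ : Set (EuclideanSpace ℝ (Fin m))),
      f (homeomorphUnitSphereProd (EuclideanSpace ℝ (Fin m)) x)
        = B.indicator (fun _ => (1:ℝ)) x.1 := by
    intro x
    simp only [hf, homeomorphUnitSphereProd_apply_fst_coe, homeomorphUnitSphereProd_apply_snd_coe]
    rw [smul_inv_smul₀ (norm_ne_zero_iff.2 x.2)]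
  have hint : Integrable (B.indicator (fun _ => (1:ℝ)))
      (volume : Measure (EuclideanSpace ℝ (Fin m))) := by
    rw [integrable_indicator_iff hBm]
    exact integrableOn_const (by rw [hvolB]; exact ENNReal.ofReal_lt_top.ne)
  have hintf : Integrable f (σ.prod (Measure.volumeIoiPow (m-1))) := by
    rw [← hMP.integrable_comp_emb (Homeomorph.measurableEmbedding _)]
    have heq : (f ∘ (homeomorphUnitSphereProd (EuclideanSpace ℝ (Fin m))))
        = fun x : ({0}ᶜ : Set (EuclideanSpace ℝ (Fin m))) =>
          B.indicator (fun _ => (1:ℝ)) x.1 := funext hcomp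
    rw [heq]
    have h1 : Integrable (B.indicator fun _ => (1:ℝ))
        (Measure.map (Subtype.val : ({0}ᶜ : Set (EuclideanSpace ℝ (Fin m))) → _)
          ((volume : Measure (EuclideanSpace ℝ (Fin m))).comap
            (Subtype.val : ({0}ᶜ : Set (EuclideanSpace ℝ (Fin m))) → _))) := by
      rw [map_comap_subtype_coe (measurableSet_singleton (0 : EuclideanSpace ℝ (Fin m))).compl,
        restrict_compl_singleton]
      exact hint
    exact ((MeasurableEmbedding.subtype_coe
      (measurableSet_singleton (0 : EuclideanSpace ℝ (Fin m))).compl).integrable_map_iff).1 h1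
  have key : (volume B).toReal
      = ∫ lam, (∫ t : Ioi (0:ℝ), f (lam, t) ∂(Measure.volumeIoiPow (m-1))) ∂σ := by
    have h0 : (volume B).toReal
        = ∫ x in ({0}ᶜ : Set (EuclideanSpace ℝ (Fin m))), B.indicator (fun _ => (1:ℝ)) x := by
      rw [restrict_compl_singleton, ← measureReal_def, ← integral_indicator_one hBm]; rfl
    rw [h0,
      ← integral_subtype_comap (measurableSet_singleton (0 : EuclideanSpace ℝ (Fin m))).compl
        (B.indicator fun _ => (1:ℝ))]
    have h2 : ∫ x : ({0}ᶜ : Set (EuclideanSpace ℝ (Fin m))), B.indicator (fun _ => (1:ℝ)) x.1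
          ∂((volume : Measure (EuclideanSpace ℝ (Fin m))).comap Subtype.val)
        = ∫ x : ({0}ᶜ : Set (EuclideanSpace ℝ (Fin m))),
            f (homeomorphUnitSphereProd (EuclideanSpace ℝ (Fin m)) x)
          ∂((volume : Measure (EuclideanSpace ℝ (Fin m))).comap Subtype.val) :=
      integral_congr_ae (Filter.Eventually.of_forall fun x => (hcomp x).symm)
    rw [h2, hMP.integral_comp (Homeomorph.measurableEmbedding _) f, integral_prod f hintf]
  set N : Set (sphere (0 : EuclideanSpace ℝ (Fin m)) 1) :=
    ⋃ j, {x : sphere (0 : EuclideanSpace ℝ (Fin m)) 1 |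
      (x : EuclideanSpace ℝ (Fin m)) j = 0} with hNdef
  have hN : σ N = 0 := measure_iUnion_null fun j => coord_zero_null m j
  have hptwise : ∀ lam ∉ N,
      (∫ t : Ioi (0:ℝ), f (lam, t) ∂(Measure.volumeIoiPow (m-1))) = Splus.indicator G lam := by
    intro lam hlam
    have hne : ∀ j, (lam : EuclideanSpace ℝ (Fin m)) j ≠ 0 := by
      intro j hj
      exact hlam (Set.mem_iUnion.2 ⟨j, hj⟩)
    by_cases hpos : ∀ j, 0 ≤ (lam : EuclideanSpace ℝ (Fin m)) j
    · have hpos' : ∀ j, 0 < (lam : EuclideanSpace ℝ (Fin m)) j :=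
        fun j => lt_of_le_of_ne (hpos j) (Ne.symm (hne j))
      set g : ℝ := Finset.univ.inf' Finset.univ_nonempty
        (fun j => c j / (lam : EuclideanSpace ℝ (Fin m)) j) with hg
      have hgpos : 0 < g := by
        rw [hg, Finset.lt_inf'_iff]
        exact fun j _ => div_pos (hc j) (hpos' j)
      have hmem : ∀ t : ℝ, 0 < t →
          (t • (lam : EuclideanSpace ℝ (Fin m)) ∈ B ↔ t ≤ g) := by
        intro t ht
        simp only [hBdef, Set.mem_setOf_eq, PiLp.smul_apply, smul_eq_mul]
        constructor
        · intro h
          rw [hg, Finset.le_inf'_iff]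
          intro j _
          rw [le_div_iff₀ (hpos' j)]
          exact (h j).2
        · intro h j
          refine ⟨mul_nonneg ht.le (hpos j), ?_⟩
          rw [← le_div_iff₀ (hpos' j)]
          exact h.trans (by rw [hg]; exact Finset.inf'_le _ (Finset.mem_univ j))
      have hstep : (∫ t : Ioi (0:ℝ), f (lam, t) ∂(Measure.volumeIoiPow (m-1)))
          = ∫ t in Set.Ioi (0:ℝ), t ^ (m-1) *
              B.indicator (fun _ => (1:ℝ)) (t • (lam : EuclideanSpace ℝ (Fin m))) :=
        integral_volumeIoiPow (m-1)
          (fun s => B.indicator (fun _ => (1:ℝ)) (s • (lam : EuclideanSpace ℝ (Fin m))))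
      have hstep2 : ∫ t in Set.Ioi (0:ℝ), t ^ (m-1) *
            B.indicator (fun _ => (1:ℝ)) (t • (lam : EuclideanSpace ℝ (Fin m)))
          = ∫ t in Set.Ioi (0:ℝ), (Set.Ioc (0:ℝ) g).indicator (fun s => s ^ (m-1)) t := by
        refine setIntegral_congr_fun measurableSet_Ioi fun t ht => ?_
        by_cases h : t ≤ g
        · rw [Set.indicator_of_mem ((hmem t ht).2 h), Set.indicator_of_mem (Set.mem_Ioc.2 ⟨ht, h⟩), mul_one]
        · rw [Set.indicator_of_notMem (fun hm => h ((hmem t ht).1 hm)),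
            Set.indicator_of_notMem (fun hm => h (Set.mem_Ioc.1 hm).2), mul_zero]
      have hstep3 : ∫ t in Set.Ioi (0:ℝ), (Set.Ioc (0:ℝ) g).indicator (fun s => s ^ (m-1)) t
          = g ^ m / m := by
        rw [setIntegral_indicator measurableSet_Ioc,
          Set.inter_eq_self_of_subset_right Set.Ioc_subset_Ioi_self,
          ← intervalIntegral.integral_of_le hgpos.le, integral_pow,
          Nat.sub_add_cancel (Nat.one_le_iff_ne_zero.2 (NeZero.ne m)),
          zero_pow (NeZero.ne m), sub_zero,
          Nat.cast_sub (Nat.one_le_iff_ne_zero.2 (NeZero.ne m)), Nat.cast_one, sub_add_cancel]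
      rw [hstep, hstep2, hstep3, Set.indicator_of_mem (show lam ∈ Splus from hpos)]
    · push_neg at hpos
      obtain ⟨j, hj⟩ := hpos
      have hjneg : (lam : EuclideanSpace ℝ (Fin m)) j < 0 :=
        lt_of_le_of_ne hj.le (hne j)
      have hzero : ∀ t : Ioi (0:ℝ), f (lam, t) = 0 := by
        intro t
        refine Set.indicator_of_notMem ?_ _
        simp only [hBdef, Set.mem_setOf_eq, PiLp.smul_apply, smul_eq_mul, not_forall]
        exact ⟨j, fun h => absurd h.1 (not_le.2 (mul_neg_of_pos_of_neg t.2.out hjneg))⟩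
      have hnot : lam ∉ Splus := by
        intro hmem
        exact absurd (hmem j) hj.not_ge
      rw [integral_congr_ae (Filter.Eventually.of_forall hzero), integral_zero,
        Set.indicator_of_notMem hnot G]
  have hae : (fun lam => ∫ t : Ioi (0:ℝ), f (lam, t) ∂(Measure.volumeIoiPow (m-1)))
      =ᵐ[σ] Splus.indicator G := by
    filter_upwards [measure_eq_zero_iff_ae_notMem.mp hN] with lam hlam
    exact hptwise lam hlam
  have := key.trans ((integral_congr_ae hae).trans (integral_indicator hSplusm))
  rw [hvolB, ENNReal.toReal_ofReal (Finset.prod_nonneg fun j _ => (hc j).le)] at this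
  exact this




/-- For a single point `a` strictly dominating `r`, the hypervolume `HV({a},r)` equals
`∏_j (a_j − r_j)`, and also equals the spherical integral
`∫_{S₊} g^mtch(a|λ,r)^m / m dσ(λ)` over the nonnegative part of the unit sphere. -/
theorem single_point_hypervolume (m : ℕ) [NeZero m]
    (a r : EuclideanSpace ℝ (Fin m)) (hdom : ∀ j, r j < a j) :
    volume ({b : EuclideanSpace ℝ (Fin m) | ∀ j, r j ≤ b j ∧ b j ≤ a j}) = ENNReal.ofReal (∏ j, (a j - r j)) ∧
    (volume ({b : EuclideanSpace ℝ (Fin m) | ∀ j, r j ≤ b j ∧ b j ≤ a j})).toReal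
      = ∫ lam in {x : Metric.sphere (0 : EuclideanSpace ℝ (Fin m)) 1 |
            ∀ j, 0 ≤ (x : EuclideanSpace ℝ (Fin m)) j},
          (Finset.univ.inf' Finset.univ_nonempty fun j =>
            (a j - r j) / (lam : EuclideanSpace ℝ (Fin m)) j) ^ m / m
          ∂((volume : Measure (EuclideanSpace ℝ (Fin m))).toSphere) := by
  have h1 := box_vol m a r (fun j => (hdom j).le)
  refine ⟨h1, ?_⟩
  rw [h1, ENNReal.toReal_ofReal (Finset.prod_nonneg fun j _ => sub_nonneg.2 (hdom j).le)]
  have hc : ∀ j, 0 < (a - r : EuclideanSpace ℝ (Fin m)) j := fun j => by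
    simpa using sub_pos.2 (hdom j)
  have h2 := part2 m (a - r) hc
  simpa using h2
end
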